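/- Let P, Q be polynomials in two variables of degree at most 2 over C, and suppose the system P = 0, Q = 0 has exactly four common solutions p_1, p_2, p_3, p_4 in C^2, each nondegenerate (the Jacobian determinant J = P_x Q_y - P_y Q_x is nonzero at each p_i). Then for every polynomial g of degree at most 1, sum_{i=1}^4 g(p_i)/J(p_i) = 0. -/

import Mathlib

open MvPolynomial

/-- The Jacobian determinant of a pair of bivariate polynomials, as a function on `ℂ²`. -/
noncomputable def jacDet (P Q : MvPolynomial (Fin 2) ℂ) (v : Fin 2 → ℂ) : ℂ :=
  eval v (pderiv 0 P) * eval v (pderiv 1 Q) - eval v (pderiv 1 P) * eval v (pderiv 0 Q)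

namespace Stmt5Aux

/-! ### Affine polynomials, lines, monomial bases -/

noncomputable def Aff (a b c : ℂ) : MvPolynomial (Fin 2) ℂ := C a + C b * X 0 + C c * X 1

noncomputable def mon : Fin 6 → MvPolynomial (Fin 2) ℂ := ![1, X 0, X 1, X 0^2, X 0 * X 1, X 1^2]
noncomputable def mon3 : Fin 3 → MvPolynomial (Fin 2) ℂ := ![1, X 0, X 1]

/-- the line through `p i` and `p j` -/
noncomputable def Lpoly (p : Fin 4 → Fin 2 → ℂ) (i j : Fin 4) : MvPolynomial (Fin 2) ℂ :=
  Aff ((p j 0 - p i 0) * p i 1 - (p j 1 - p i 1) * p i 0) (p j 1 - p i 1) (-(p j 0 - p i 0))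

/-- collinearity determinant -/
noncomputable def dd (p : Fin 4 → Fin 2 → ℂ) (i j k : Fin 4) : ℂ :=
  (p j 1 - p i 1) * (p k 0 - p i 0) - (p j 0 - p i 0) * (p k 1 - p i 1)

lemma eval_Aff (a b c : ℂ) (v : Fin 2 → ℂ) : eval v (Aff a b c) = a + b * v 0 + c * v 1 := by
  simp [Aff]

lemma pderiv0_Aff (a b c : ℂ) : pderiv 0 (Aff a b c) = C b := by
  simp [Aff, pderiv_X_self, pderiv_X_of_ne (show (1:Fin 2) ≠ 0 by decide)]

lemma pderiv1_Aff (a b c : ℂ) : pderiv 1 (Aff a b c) = C c := by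
  simp [Aff, pderiv_X_self, pderiv_X_of_ne (show (0:Fin 2) ≠ 1 by decide)]

lemma eval_L (p : Fin 4 → Fin 2 → ℂ) (i j : Fin 4) (v : Fin 2 → ℂ) :
    eval v (Lpoly p i j) = (p j 1 - p i 1) * (v 0 - p i 0) - (p j 0 - p i 0) * (v 1 - p i 1) := by
  rw [Lpoly, eval_Aff]; ring

lemma eval_L_pt (p : Fin 4 → Fin 2 → ℂ) (i j k : Fin 4) :
    eval (p k) (Lpoly p i j) = dd p i j k := by
  rw [eval_L, dd]

/-! ### Jacobian computation rules -/

lemma jacDet_Aff (a b c d e f : ℂ) (v : Fin 2 → ℂ) :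
    jacDet (Aff a b c) (Aff d e f) v = b * f - c * e := by
  simp [jacDet, pderiv0_Aff, pderiv1_Aff]

lemma jac_LL (p : Fin 4 → Fin 2 → ℂ) (i j k l : Fin 4) (v : Fin 2 → ℂ) :
    jacDet (Lpoly p i j) (Lpoly p k l) v =
      (p j 1 - p i 1) * (-(p l 0 - p k 0)) - (-(p j 0 - p i 0)) * (p l 1 - p k 1) :=
  jacDet_Aff _ _ _ _ _ _ v

lemma jacDet_mul_mul (F G H K : MvPolynomial (Fin 2) ℂ) (v : Fin 2 → ℂ) :
    jacDet (F * G) (H * K) v =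
      eval v F * eval v H * jacDet G K v + eval v F * eval v K * jacDet G H v +
      eval v G * eval v H * jacDet F K v + eval v G * eval v K * jacDet F H v := by
  simp only [jacDet, pderiv_mul, map_add, map_mul]
  ring

lemma jacDet_comb (a b c d : ℂ) (A B : MvPolynomial (Fin 2) ℂ) (v : Fin 2 → ℂ) :
    jacDet (a • A + b • B) (c • A + d • B) v = (a * d - b * c) * jacDet A B v := by
  simp only [jacDet, map_add, smul_eq_C_mul, pderiv_mul, pderiv_C, map_mul, eval_C,
    zero_mul, add_zero, zero_add, eval_add]
  ring

/-! ### Polynomials of low degree lie in the span of few monomials -/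

lemma single_decomp (s : Fin 2 →₀ ℕ) : s = Finsupp.single 0 (s 0) + Finsupp.single 1 (s 1) := by
  ext i; fin_cases i <;> simp

lemma monomial_eq_smul (s : Fin 2 →₀ ℕ) (c : ℂ) :
    monomial s c = c • (X 0 ^ (s 0) * X 1 ^ (s 1) : MvPolynomial (Fin 2) ℂ) := by
  rw [X_pow_eq_monomial, X_pow_eq_monomial, monomial_mul, one_mul, smul_monomial, smul_eq_mul,
    mul_one, ← single_decomp]

lemma deg_sum (s : Fin 2 →₀ ℕ) : (s.sum fun _ e => e) = s 0 + s 1 := by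
  rw [Finsupp.sum_fintype _ _ (fun _ => rfl), Fin.sum_univ_two]

lemma mem_mon_span {P : MvPolynomial (Fin 2) ℂ} (hP : P.totalDegree ≤ 2) :
    P ∈ Submodule.span ℂ (Set.range mon) := by
  rw [P.as_sum]
  refine Submodule.sum_mem _ fun s hs => ?_
  have hdeg : s 0 + s 1 ≤ 2 := by
    rw [← deg_sum]; exact le_trans (le_totalDegree hs) hP
  rw [monomial_eq_smul]
  refine Submodule.smul_mem _ _ (Submodule.subset_span ?_)
  have hcases : (s 0 = 0 ∧ s 1 = 0) ∨ (s 0 = 1 ∧ s 1 = 0) ∨ (s 0 = 0 ∧ s 1 = 1) ∨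
      (s 0 = 2 ∧ s 1 = 0) ∨ (s 0 = 1 ∧ s 1 = 1) ∨ (s 0 = 0 ∧ s 1 = 2) := by omega
  rcases hcases with h | h | h | h | h | h
  · exact ⟨0, by rw [h.1, h.2]; simp [mon]⟩
  · exact ⟨1, by rw [h.1, h.2]; simp [mon]⟩
  · exact ⟨2, by rw [h.1, h.2]; simp [mon]⟩
  · exact ⟨3, by rw [h.1, h.2]; simp [mon]⟩
  · exact ⟨4, by rw [h.1, h.2]; simp [mon]⟩
  · exact ⟨5, by rw [h.1, h.2]; rw [pow_zero, one_mul]; rfl⟩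

lemma mem_mon3_span {g : MvPolynomial (Fin 2) ℂ} (hg : g.totalDegree ≤ 1) :
    g ∈ Submodule.span ℂ (Set.range mon3) := by
  rw [g.as_sum]
  refine Submodule.sum_mem _ fun s hs => ?_
  have hdeg : s 0 + s 1 ≤ 1 := by
    rw [← deg_sum]; exact le_trans (le_totalDegree hs) hg
  rw [monomial_eq_smul]
  refine Submodule.smul_mem _ _ (Submodule.subset_span ?_)
  have hcases : (s 0 = 0 ∧ s 1 = 0) ∨ (s 0 = 1 ∧ s 1 = 0) ∨ (s 0 = 0 ∧ s 1 = 1) := by omega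
  rcases hcases with h | h | h
  · exact ⟨0, by rw [h.1, h.2]; simp [mon3]⟩
  · exact ⟨1, by rw [h.1, h.2]; simp [mon3]⟩
  · exact ⟨2, by rw [h.1, h.2]; simp [mon3]⟩

/-! ### The model space `ℂ⁶` and the evaluation map -/

noncomputable def Phi : (Fin 6 → ℂ) →ₗ[ℂ] MvPolynomial (Fin 2) ℂ where
  toFun u := ∑ i, u i • mon i
  map_add' u v := by simp [add_smul, Finset.sum_add_distrib]
  map_smul' a u := by simp [smul_smul, Finset.smul_sum]

lemma Phi_apply (u : Fin 6 → ℂ) : Phi u = ∑ i, u i • mon i := rfl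

noncomputable def evL (v : Fin 2 → ℂ) : MvPolynomial (Fin 2) ℂ →ₗ[ℂ] ℂ where
  toFun P := eval v P
  map_add' := by simp
  map_smul' := by simp [smul_eval]

noncomputable def Emap (p : Fin 4 → Fin 2 → ℂ) : (Fin 6 → ℂ) →ₗ[ℂ] (Fin 4 → ℂ) :=
  LinearMap.pi fun i => (evL (p i)).comp Phi

lemma Emap_apply (p : Fin 4 → Fin 2 → ℂ) (u : Fin 6 → ℂ) (i : Fin 4) :
    Emap p u i = eval (p i) (Phi u) := rfl

noncomputable def vecAff (a b c d e f : ℂ) : Fin 6 → ℂ :=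
  ![a*d, a*e + b*d, a*f + c*d, b*e, b*f + c*e, c*f]

lemma Phi_vecAff (a b c d e f : ℂ) : Phi (vecAff a b c d e f) = Aff a b c * Aff d e f := by
  rw [Phi_apply]
  simp only [vecAff, mon, Aff, Fin.sum_univ_succ, Fin.sum_univ_zero, Matrix.cons_val_zero,
    Matrix.cons_val_succ, smul_eq_C_mul, add_zero, map_add, map_mul]
  ring

/-! ### Restriction to lines-/

lemma eval_line (s : Fin 2 → Polynomial ℂ) (R : MvPolynomial (Fin 2) ℂ) (t : ℂ) :
    Polynomial.eval t (aeval s R) = eval (fun m => Polynomial.eval t (s m)) R := by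
  induction R using MvPolynomial.induction_on with
  | C a => simp
  | add f g hf hg => simp [hf, hg]
  | mul_X f n hf => simp [hf]

lemma natDegree_aeval_le (s : Fin 2 → Polynomial ℂ) (hs : ∀ m, (s m).natDegree ≤ 1)
    {R : MvPolynomial (Fin 2) ℂ} (hR : R ∈ Submodule.span ℂ (Set.range mon)) :
    (aeval s R).natDegree ≤ 2 := by
  induction hR using Submodule.span_induction with
  | mem x hx =>
      obtain ⟨i, rfl⟩ := hx
      have hi : i = 0 ∨ i = 1 ∨ i = 2 ∨ i = 3 ∨ i = 4 ∨ i = 5 := by omega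
      have e0 : mon 0 = 1 := rfl
      have e1 : mon 1 = X 0 := rfl
      have e2 : mon 2 = X 1 := rfl
      have e3 : mon 3 = X 0 ^ 2 := rfl
      have e4 : mon 4 = X 0 * X 1 := rfl
      have e5 : mon 5 = X 1 ^ 2 := rfl
      rcases hi with rfl | rfl | rfl | rfl | rfl | rfl
      · rw [e0, map_one]; simp
      · rw [e1, aeval_X]; exact (hs 0).trans one_le_two
      · rw [e2, aeval_X]; exact (hs 1).trans one_le_two
      · rw [e3, map_pow, aeval_X]
        exact Polynomial.natDegree_pow_le.trans (by have := hs 0; omega)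
      · rw [e4, map_mul, aeval_X, aeval_X]
        exact Polynomial.natDegree_mul_le.trans (by have := hs 0; have := hs 1; omega)
      · rw [e5, map_pow, aeval_X]
        exact Polynomial.natDegree_pow_le.trans (by have := hs 1; omega)
  | zero => rw [map_zero]; simp
  | add x y _ _ hx hy => rw [map_add]; exact (Polynomial.natDegree_add_le _ _).trans (max_le hx hy)
  | smul a x _ hx => rw [map_smul]; exact (Polynomial.natDegree_smul_le _ _).trans hx

lemma vanish_on_line (R : MvPolynomial (Fin 2) ℂ) (hRm : R ∈ Submodule.span ℂ (Set.range mon))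
    (b d : Fin 2 → ℂ) (t₀ t₁ t₂ : ℂ) (h01 : t₀ ≠ t₁) (h02 : t₀ ≠ t₂) (h12 : t₁ ≠ t₂)
    (hv : ∀ r ∈ ({t₀, t₁, t₂} : Finset ℂ), eval (fun m => b m + r * d m) R = 0) (t : ℂ) :
    eval (fun m => b m + t * d m) R = 0 := by
  set s : Fin 2 → Polynomial ℂ := fun m => Polynomial.C (b m) + Polynomial.C (d m) * Polynomial.X
    with hs
  have hev : ∀ r : ℂ, Polynomial.eval r (aeval s R) = eval (fun m => b m + r * d m) R := by
    intro r
    rw [eval_line]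
    have hfe : (fun m => Polynomial.eval r (s m)) = fun m => b m + r * d m := by
      funext m; simp [hs]; ring
    rw [hfe]
  have hzero : aeval s R = 0 := by
    by_contra hne
    have hdeg : (aeval s R).natDegree ≤ 2 := by
      refine natDegree_aeval_le s (fun m => ?_) hRm
      refine (Polynomial.natDegree_add_le _ _).trans (max_le (by simp) ?_)
      exact (Polynomial.natDegree_mul_le).trans (by simp)
    have hsub : ({t₀, t₁, t₂} : Finset ℂ) ⊆ (aeval s R).roots.toFinset := by
      intro r hr
      rw [Multiset.mem_toFinset, Polynomial.mem_roots hne, Polynomial.IsRoot, hev r]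
      exact hv r hr
    have hcard : ({t₀, t₁, t₂} : Finset ℂ).card = 3 := by
      rw [Finset.card_insert_of_notMem (by simp [h01, h02]),
        Finset.card_insert_of_notMem (by simp [h12]), Finset.card_singleton]
    have : (3 : ℕ) ≤ 2 :=
      hcard ▸ (Finset.card_le_card hsub).trans
        ((Multiset.toFinset_card_le _).trans ((aeval s R).card_roots'.trans hdeg))
    omega
  rw [← hev, hzero]
  simp

lemma fin2_ext {u v : Fin 2 → ℂ} (h0 : u 0 = v 0) (h1 : u 1 = v 1) : u = v := by
  funext m; fin_cases m <;> assumption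

/-! ### No three of the four points are collinear -/

lemma nc (P Q : MvPolynomial (Fin 2) ℂ)
    (hPm : P ∈ Submodule.span ℂ (Set.range mon)) (hQm : Q ∈ Submodule.span ℂ (Set.range mon))
    (p : Fin 4 → (Fin 2 → ℂ)) (hinj : Function.Injective p)
    (hPz : ∀ i, eval (p i) P = 0) (hQz : ∀ i, eval (p i) Q = 0)
    (hall : ∀ v : Fin 2 → ℂ, eval v P = 0 → eval v Q = 0 → ∃ i, v = p i)
    {i j k : Fin 4} (hij : i ≠ j) (hik : i ≠ k) (hjk : j ≠ k) :
    dd p i j k ≠ 0 := by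
  intro hzero
  rw [dd] at hzero
  set d : Fin 2 → ℂ := fun m => p j m - p i m with hd
  have hdj : ∀ m, p i m + 1 * d m = p j m := fun m => by rw [hd]; ring
  set t₂ : ℂ := if h : p j 0 - p i 0 = 0 then (p k 1 - p i 1)/(p j 1 - p i 1)
    else (p k 0 - p i 0)/(p j 0 - p i 0) with ht₂
  have hne : p i ≠ p j := fun h => hij (hinj h)
  have hd0 : d 0 = p j 0 - p i 0 := rfl
  have hd1 : d 1 = p j 1 - p i 1 := rfl
  have hkpt : (fun m => p i m + t₂ * d m) = p k := by
    by_cases hx : p j 0 - p i 0 = 0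
    · have hy : p j 1 - p i 1 ≠ 0 := by
        intro hy
        exact hne (fin2_ext (by linear_combination -hx) (by linear_combination -hy))
      have hxk : p k 0 - p i 0 = 0 := by
        rcases mul_eq_zero.1 (by linear_combination hzero + (p k 1 - p i 1) * hx :
          (p j 1 - p i 1) * (p k 0 - p i 0) = 0) with h | h
        · exact absurd h hy
        · exact h
      refine fin2_ext ?_ ?_
      · show p i 0 + t₂ * d 0 = p k 0
        rw [hd0, hx, mul_zero, add_zero]; linear_combination -hxk
      · show p i 1 + t₂ * d 1 = p k 1
        rw [hd1, ht₂, dif_pos hx, div_mul_cancel₀ _ hy]; ring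
    · refine fin2_ext ?_ ?_
      · show p i 0 + t₂ * d 0 = p k 0
        rw [hd0, ht₂, dif_neg hx, div_mul_cancel₀ _ hx]; ring
      · show p i 1 + t₂ * d 1 = p k 1
        rw [hd1, ht₂, dif_neg hx]
        field_simp
        linear_combination hzero
  have ht20 : t₂ ≠ 0 := by
    intro h
    apply hik (hinj _)
    rw [← hkpt, h]
    funext m; ring
  have ht21 : t₂ ≠ 1 := by
    intro h
    apply hjk (hinj _)
    rw [← funext hdj, ← hkpt, h]
  have hPl := vanish_on_line P hPm (p i) d 0 1 t₂ (by norm_num) (Ne.symm ht20) (Ne.symm ht21)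
    (by
      intro r hr
      simp only [Finset.mem_insert, Finset.mem_singleton] at hr
      rcases hr with rfl | rfl | rfl
      · simpa using hPz i
      · rw [funext hdj]; exact hPz j
      · rw [hkpt]; exact hPz k)
  have hQl := vanish_on_line Q hQm (p i) d 0 1 t₂ (by norm_num) (Ne.symm ht20) (Ne.symm ht21)
    (by
      intro r hr
      simp only [Finset.mem_insert, Finset.mem_singleton] at hr
      rcases hr with rfl | rfl | rfl
      · simpa using hQz i
      · rw [funext hdj]; exact hQz j
      · rw [hkpt]; exact hQz k)
  have hsol : ∀ t : ℂ, ∃ n, (fun m => p i m + t * d m) = p n := fun t => hall _ (hPl t) (hQl t)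
  choose F hF using hsol
  obtain ⟨t1, ht1, t2, ht2, hne12, hFeq⟩ :=
    Finset.exists_ne_map_eq_of_card_lt_of_maps_to
      (show (Finset.univ : Finset (Fin 4)).card < ({0,1,2,3,4} : Finset ℂ).card by
        rw [Finset.card_univ]; norm_num)
      (fun (t : ℂ) _ => Finset.mem_univ (F t))
  have heq : (fun m => p i m + t1 * d m) = fun m => p i m + t2 * d m := by
    rw [hF t1, hF t2, hFeq]
  have hdm : ∀ m, d m = 0 := by
    intro m
    have := congrFun heq m
    have h2 : (t1 - t2) * d m = 0 := by linear_combination this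
    rcases mul_eq_zero.1 h2 with h | h
    · exact absurd (by linear_combination h) hne12
    · exact h
  exact hne (funext fun m => by linear_combination -(hdm m))

/-! ### Surjectivity of the evaluation map -/

lemma exists_sep (q w : Fin 2 → ℂ) (h : q ≠ w) :
    ∃ b c : ℂ, b * (w 0 - q 0) + c * (w 1 - q 1) ≠ 0 := by
  by_cases h0 : q 0 = w 0
  · refine ⟨0, 1, ?_⟩
    have h1 : q 1 ≠ w 1 := by
      intro h1
      exact h (funext fun m => by fin_cases m <;> assumption)
    simp [sub_ne_zero.2 (Ne.symm h1)]
  · exact ⟨1, 0, by simp [sub_ne_zero.2 (Ne.symm h0)]⟩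

lemma mem_four (i j k l m : Fin 4) (hij : i ≠ j) (hik : i ≠ k) (hil : i ≠ l)
    (hjk : j ≠ k) (hjl : j ≠ l) (hkl : k ≠ l) : m = i ∨ m = j ∨ m = k ∨ m = l := by
  omega

lemma single_vec (p : Fin 4 → Fin 2 → ℂ) (hinj : Function.Injective p)
    (hnc : ∀ i' j' k' : Fin 4, i' ≠ j' → i' ≠ k' → j' ≠ k' → dd p i' j' k' ≠ 0)
    (i j k l : Fin 4) (hij : i ≠ j) (hik : i ≠ k) (hil : i ≠ l) (hjk : j ≠ k)
    (hjl : j ≠ l) (hkl : k ≠ l) :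
    ∃ u : Fin 6 → ℂ, ∃ c0 : ℂ, c0 ≠ 0 ∧ Emap p u = Pi.single i c0 := by
  obtain ⟨b, c, hbc⟩ := exists_sep (p l) (p i) (fun h => hil (hinj h).symm)
  refine ⟨vecAff ((p k 0 - p j 0) * p j 1 - (p k 1 - p j 1) * p j 0) (p k 1 - p j 1)
      (-(p k 0 - p j 0)) (-(b * p l 0 + c * p l 1)) b c,
    dd p j k i * (b * (p i 0 - p l 0) + c * (p i 1 - p l 1)), ?_, ?_⟩
  · exact mul_ne_zero (hnc j k i hjk (Ne.symm hij) (Ne.symm hik)) hbc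
  · funext m
    rw [Emap_apply, Phi_vecAff]
    have hLf : (Aff ((p k 0 - p j 0) * p j 1 - (p k 1 - p j 1) * p j 0) (p k 1 - p j 1)
        (-(p k 0 - p j 0))) = Lpoly p j k := rfl
    rw [hLf, map_mul, eval_L_pt, eval_Aff]
    rcases mem_four i j k l m hij hik hil hjk hjl hkl with h | h | h | h
    · rw [h, Pi.single_eq_same]; ring
    · rw [h, Pi.single_eq_of_ne (Ne.symm hij)]
      have : dd p j k j = 0 := by rw [dd]; ring
      rw [this, zero_mul]
    · rw [h, Pi.single_eq_of_ne (Ne.symm hik)]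
      have : dd p j k k = 0 := by rw [dd]; ring
      rw [this, zero_mul]
    · rw [h, Pi.single_eq_of_ne (Ne.symm hil)]
      have : -(b * p l 0 + c * p l 1) + b * p l 0 + c * p l 1 = 0 := by ring
      rw [this, mul_zero]

lemma surj_of_diag (T : (Fin 6 → ℂ) →ₗ[ℂ] (Fin 4 → ℂ)) (u : Fin 4 → Fin 6 → ℂ)
    (c : Fin 4 → ℂ) (hc : ∀ i, c i ≠ 0) (h : ∀ i, T (u i) = Pi.single i (c i)) :
    Function.Surjective T := by
  intro w
  refine ⟨∑ i, (w i / c i) • u i, ?_⟩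
  rw [map_sum]
  funext j
  simp only [Finset.sum_apply, Pi.smul_apply, map_smul, h, smul_eq_mul]
  rw [Finset.sum_eq_single j]
  · simp [Pi.single_apply, div_mul_cancel₀ _ (hc j)]
  · intro i _ hij; simp [Pi.single_apply, (Ne.symm hij)]
  · simp

end Stmt5Aux

open Stmt5Aux

/-- Jacobi's relation for the intersection of two conics: if `P = Q = 0` has exactly four
common solutions in `ℂ²`, all nondegenerate, then `∑ g(pᵢ)/J(pᵢ) = 0` for every affine
linear `g`. -/
theorem stmt_5 (P Q : MvPolynomial (Fin 2) ℂ)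
    (hP : P.totalDegree ≤ 2) (hQ : Q.totalDegree ≤ 2)
    (p : Fin 4 → (Fin 2 → ℂ)) (hinj : Function.Injective p)
    (hPz : ∀ i, eval (p i) P = 0) (hQz : ∀ i, eval (p i) Q = 0)
    (hall : ∀ v : Fin 2 → ℂ, eval v P = 0 → eval v Q = 0 → ∃ i, v = p i)
    (hnd : ∀ i, jacDet P Q (p i) ≠ 0)
    (g : MvPolynomial (Fin 2) ℂ) (hg : g.totalDegree ≤ 1) :
    ∑ i, eval (p i) g / jacDet P Q (p i) = 0 := by
  classical
  have hPm := mem_mon_span hP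
  have hQm := mem_mon_span hQ
  have hnc : ∀ i j k : Fin 4, i ≠ j → i ≠ k → j ≠ k → dd p i j k ≠ 0 :=
    fun i j k hij hik hjk => nc P Q hPm hQm p hinj hPz hQz hall hij hik hjk
  -- surjectivity of the evaluation map on the model space ℂ⁶
  obtain ⟨u0, c0, hc0, hu0⟩ := single_vec p hinj hnc 0 1 2 3 (by decide) (by decide) (by decide)
    (by decide) (by decide) (by decide)
  obtain ⟨u1, c1, hc1, hu1⟩ := single_vec p hinj hnc 1 0 2 3 (by decide) (by decide) (by decide)
    (by decide) (by decide) (by decide)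
  obtain ⟨u2, c2, hc2, hu2⟩ := single_vec p hinj hnc 2 0 1 3 (by decide) (by decide) (by decide)
    (by decide) (by decide) (by decide)
  obtain ⟨u3, c3, hc3, hu3⟩ := single_vec p hinj hnc 3 0 1 2 (by decide) (by decide) (by decide)
    (by decide) (by decide) (by decide)
  have hsurj : Function.Surjective (Emap p) := by
    refine surj_of_diag (Emap p) ![u0, u1, u2, u3] ![c0, c1, c2, c3] ?_ ?_
    · intro i; fin_cases i <;> simpa
    · intro i; fin_cases i <;> simpa
  have hker2 : Module.finrank ℂ (LinearMap.ker (Emap p)) = 2 := by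
    have h := (Emap p).finrank_range_add_finrank_ker
    rw [LinearMap.range_eq_top.2 hsurj, finrank_top] at h
    have h4 : Module.finrank ℂ (Fin 4 → ℂ) = 4 := Module.finrank_fin_fun ℂ
    have h6 : Module.finrank ℂ (Fin 6 → ℂ) = 6 := Module.finrank_fin_fun ℂ
    omega
  -- the two degenerate conics through the four points
  set A : MvPolynomial (Fin 2) ℂ := Lpoly p 0 1 * Lpoly p 2 3 with hA
  set B : MvPolynomial (Fin 2) ℂ := Lpoly p 0 2 * Lpoly p 1 3 with hB
  set uA : Fin 6 → ℂ := vecAff ((p 1 0 - p 0 0) * p 0 1 - (p 1 1 - p 0 1) * p 0 0)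
    (p 1 1 - p 0 1) (-(p 1 0 - p 0 0))
    ((p 3 0 - p 2 0) * p 2 1 - (p 3 1 - p 2 1) * p 2 0) (p 3 1 - p 2 1) (-(p 3 0 - p 2 0))
    with huAdef
  set uB : Fin 6 → ℂ := vecAff ((p 2 0 - p 0 0) * p 0 1 - (p 2 1 - p 0 1) * p 0 0)
    (p 2 1 - p 0 1) (-(p 2 0 - p 0 0))
    ((p 3 0 - p 1 0) * p 1 1 - (p 3 1 - p 1 1) * p 1 0) (p 3 1 - p 1 1) (-(p 3 0 - p 1 0))
    with huBdef
  have hPhiA : Phi uA = A := Phi_vecAff _ _ _ _ _ _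
  have hPhiB : Phi uB = B := Phi_vecAff _ _ _ _ _ _
  have hkA : uA ∈ LinearMap.ker (Emap p) := by
    rw [LinearMap.mem_ker]
    funext i
    rw [Emap_apply, hPhiA, hA, map_mul, eval_L_pt, eval_L_pt, Pi.zero_apply]
    rcases mem_four 0 1 2 3 i (by decide) (by decide) (by decide) (by decide) (by decide)
      (by decide) with h | h | h | h
    · rw [h, show dd p 0 1 0 = 0 from by rw [dd]; ring, zero_mul]
    · rw [h, show dd p 0 1 1 = 0 from by rw [dd]; ring, zero_mul]
    · rw [h, show dd p 2 3 2 = 0 from by rw [dd]; ring, mul_zero]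
    · rw [h, show dd p 2 3 3 = 0 from by rw [dd]; ring, mul_zero]
  have hkB : uB ∈ LinearMap.ker (Emap p) := by
    rw [LinearMap.mem_ker]
    funext i
    rw [Emap_apply, hPhiB, hB, map_mul, eval_L_pt, eval_L_pt, Pi.zero_apply]
    rcases mem_four 0 1 2 3 i (by decide) (by decide) (by decide) (by decide) (by decide)
      (by decide) with h | h | h | h
    · rw [h, show dd p 0 2 0 = 0 from by rw [dd]; ring, zero_mul]
    · rw [h, show dd p 1 3 1 = 0 from by rw [dd]; ring, mul_zero]
    · rw [h, show dd p 0 2 2 = 0 from by rw [dd]; ring, zero_mul]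
    · rw [h, show dd p 1 3 3 = 0 from by rw [dd]; ring, mul_zero]
  -- linear independence of the two conics
  have hli : LinearIndependent ℂ ![uA, uB] := by
    rw [LinearIndependent.pair_iff]
    intro s t hst
    have hPoly : s • A + t • B = 0 := by
      rw [← hPhiA, ← hPhiB, ← map_smul, ← map_smul, ← map_add, hst, map_zero]
    set q1 : Fin 2 → ℂ := ![p 0 0 + 2*(p 1 0 - p 0 0), p 0 1 + 2*(p 1 1 - p 0 1)] with hq1def
    have hq10 : q1 0 = p 0 0 + 2*(p 1 0 - p 0 0) := rfl
    have hq11 : q1 1 = p 0 1 + 2*(p 1 1 - p 0 1) := rfl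
    set q2 : Fin 2 → ℂ := ![p 0 0 + 2*(p 2 0 - p 0 0), p 0 1 + 2*(p 2 1 - p 0 1)] with hq2def
    have hq20 : q2 0 = p 0 0 + 2*(p 2 0 - p 0 0) := rfl
    have hq21 : q2 1 = p 0 1 + 2*(p 2 1 - p 0 1) := rfl
    have hA1 : eval q1 A = 0 := by
      have h1 : (p 1 1 - p 0 1) * (q1 0 - p 0 0) - (p 1 0 - p 0 0) * (q1 1 - p 0 1) = 0 := by
        rw [hq10, hq11]; ring
      rw [hA, map_mul, eval_L, h1, zero_mul]
    have hB1 : eval q1 B = (2 * dd p 0 2 1) * (-(dd p 1 3 0)) := by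
      rw [hB, map_mul, eval_L, eval_L, hq10, hq11, dd, dd]; ring
    have hB2 : eval q2 B = 0 := by
      have h1 : (p 2 1 - p 0 1) * (q2 0 - p 0 0) - (p 2 0 - p 0 0) * (q2 1 - p 0 1) = 0 := by
        rw [hq20, hq21]; ring
      rw [hB, map_mul, eval_L, h1, zero_mul]
    have hA2 : eval q2 A = (2 * dd p 0 1 2) * (-(dd p 2 3 0)) := by
      rw [hA, map_mul, eval_L, eval_L, hq20, hq21, dd, dd]; ring
    have ht : t = 0 := by
      have h := congrArg (eval q1) hPoly
      rw [map_add, smul_eval, smul_eval, hA1, hB1, map_zero, mul_zero, zero_add] at h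
      have hne : (2 * dd p 0 2 1) * (-(dd p 1 3 0)) ≠ 0 :=
        mul_ne_zero (mul_ne_zero two_ne_zero (hnc 0 2 1 (by decide) (by decide) (by decide)))
          (neg_ne_zero.2 (hnc 1 3 0 (by decide) (by decide) (by decide)))
      exact (mul_eq_zero.1 h).resolve_right hne
    have hs : s = 0 := by
      have h := congrArg (eval q2) hPoly
      rw [map_add, smul_eval, smul_eval, hA2, hB2, map_zero, mul_zero, add_zero] at h
      have hne : (2 * dd p 0 1 2) * (-(dd p 2 3 0)) ≠ 0 :=
        mul_ne_zero (mul_ne_zero two_ne_zero (hnc 0 1 2 (by decide) (by decide) (by decide)))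
          (neg_ne_zero.2 (hnc 2 3 0 (by decide) (by decide) (by decide)))
      exact (mul_eq_zero.1 h).resolve_right hne
    exact ⟨hs, ht⟩
  -- the kernel is exactly the span of the two conic vectors
  have hrange : Set.range ![uA, uB] = {uA, uB} := by
    ext z
    simp [Matrix.range_cons, Matrix.range_empty]
    tauto
  have hspan2 : Module.finrank ℂ (Submodule.span ℂ ({uA, uB} : Set (Fin 6 → ℂ))) = 2 := by
    rw [← hrange, finrank_span_eq_card hli]
    simp
  have hle : Submodule.span ℂ ({uA, uB} : Set (Fin 6 → ℂ)) ≤ LinearMap.ker (Emap p) := by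
    rw [Submodule.span_le]
    intro x hx
    rcases Set.mem_insert_iff.1 hx with rfl | hx'
    · exact hkA
    · rw [Set.mem_singleton_iff] at hx'
      subst hx'
      exact hkB
  have hspaneq : Submodule.span ℂ ({uA, uB} : Set (Fin 6 → ℂ)) = LinearMap.ker (Emap p) :=
    Submodule.eq_of_le_of_finrank_le hle (by rw [hker2, hspan2])
  -- decompose P and Q in the pencil
  obtain ⟨cP, hcP⟩ := (Submodule.mem_span_range_iff_exists_fun ℂ).mp hPm
  obtain ⟨cQ, hcQ⟩ := (Submodule.mem_span_range_iff_exists_fun ℂ).mp hQm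
  have hPhiP : Phi cP = P := by rw [Phi_apply]; exact hcP
  have hPhiQ : Phi cQ = Q := by rw [Phi_apply]; exact hcQ
  have hcPk : cP ∈ LinearMap.ker (Emap p) := by
    rw [LinearMap.mem_ker]
    funext i
    rw [Emap_apply, hPhiP, Pi.zero_apply]
    exact hPz i
  have hcQk : cQ ∈ LinearMap.ker (Emap p) := by
    rw [LinearMap.mem_ker]
    funext i
    rw [Emap_apply, hPhiQ, Pi.zero_apply]
    exact hQz i
  rw [← hspaneq] at hcPk hcQk
  obtain ⟨α, β, hαβ⟩ := Submodule.mem_span_pair.1 hcPk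
  obtain ⟨γ, δ, hγδ⟩ := Submodule.mem_span_pair.1 hcQk
  have hPdec : α • A + β • B = P := by
    rw [← hPhiA, ← hPhiB, ← map_smul, ← map_smul, ← map_add, hαβ, hPhiP]
  have hQdec : γ • A + δ • B = Q := by
    rw [← hPhiA, ← hPhiB, ← map_smul, ← map_smul, ← map_add, hγδ, hPhiQ]
  -- the Jacobian of (P, Q) is a constant multiple of that of (A, B)
  have hJ : ∀ v, jacDet P Q v = (α * δ - β * γ) * jacDet A B v := by
    intro v
    rw [← hPdec, ← hQdec, jacDet_comb]
  set k' : ℂ := α * δ - β * γ with hk'def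
  have hJne : ∀ i, k' * jacDet A B (p i) ≠ 0 := fun i => by rw [← hJ]; exact hnd i
  have hk'ne : k' ≠ 0 := fun h => hJne 0 (by rw [h, zero_mul])
  have hJABne : ∀ i, jacDet A B (p i) ≠ 0 := fun i h => hJne i (by rw [h, mul_zero])
  have hKne : jacDet A B (p 0) * dd p 1 2 3 ≠ 0 :=
    mul_ne_zero (hJABne 0) (hnc 1 2 3 (by decide) (by decide) (by decide))
  -- the key cross identities
  have key1 : jacDet A B (p 1) * (-(dd p 0 2 3)) = jacDet A B (p 0) * dd p 1 2 3 := by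
    rw [hA, hB]
    simp only [jacDet_mul_mul, eval_L_pt, jac_LL, dd]
    ring
  have key2 : jacDet A B (p 2) * dd p 0 1 3 = jacDet A B (p 0) * dd p 1 2 3 := by
    rw [hA, hB]
    simp only [jacDet_mul_mul, eval_L_pt, jac_LL, dd]
    ring
  have key3 : jacDet A B (p 3) * (-(dd p 0 1 2)) = jacDet A B (p 0) * dd p 1 2 3 := by
    rw [hA, hB]
    simp only [jacDet_mul_mul, eval_L_pt, jac_LL, dd]
    ring
  -- decompose g
  obtain ⟨cg, hcg⟩ := (Submodule.mem_span_range_iff_exists_fun ℂ).mp (mem_mon3_span hg)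
  have hgev : ∀ v : Fin 2 → ℂ, eval v g = cg 0 + cg 1 * v 0 + cg 2 * v 1 := by
    intro v
    rw [← hcg, map_sum, Fin.sum_univ_three, show mon3 0 = 1 from rfl, show mon3 1 = X 0 from rfl,
      show mon3 2 = X 1 from rfl, smul_eval, smul_eval, smul_eval, map_one, eval_X, eval_X]
    ring
  -- rewrite each term over the common denominator
  have hterm : ∀ (i : Fin 4) (ci : ℂ),
      jacDet A B (p i) * ci = jacDet A B (p 0) * dd p 1 2 3 →
      eval (p i) g / jacDet P Q (p i) =
        (ci * eval (p i) g) / (k' * (jacDet A B (p 0) * dd p 1 2 3)) := by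
    intro i ci hkey
    rw [hJ (p i), div_eq_div_iff (hJne i) (mul_ne_zero hk'ne hKne)]
    linear_combination (-(eval (p i) g * k')) * hkey
  have key0 : jacDet A B (p 0) * dd p 1 2 3 = jacDet A B (p 0) * dd p 1 2 3 := rfl
  rw [Fin.sum_univ_four, hterm 0 _ key0, hterm 1 _ key1, hterm 2 _ key2, hterm 3 _ key3,
    ← add_div, ← add_div, ← add_div]
  have hnum : dd p 1 2 3 * eval (p 0) g + -(dd p 0 2 3) * eval (p 1) g +
      dd p 0 1 3 * eval (p 2) g + -(dd p 0 1 2) * eval (p 3) g = 0 := by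
    rw [hgev, hgev, hgev, hgev]
    simp only [dd]
    ring
  rw [hnum, zero_div]
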